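/- arXiv:2105.00538 — 4 statements merged into one kernel-verified Lean document; each statement's English description precedes it below -/
import Mathlib

section
/- Let p be a prime, and let α, β be natural numbers with β ≥ 1. Suppose m_0, …, m_{p^β} are natural numbers with m_0 + ⋯ + m_{p^β} = p^α such that this sum is carry-free in base p and such that every index j with m_j ≠ 0 is a carry-free summand of p^β. Then there exists i ∈ {0, p^β} with m_i = p^α and m_j = 0 for all j ≠ i. Consequently the set of possible values of Σ_j j·m_j is exactly {0, p^{α+β}}. -/
private lemma carry_lemma (p n : ℕ) (hp : 2 ≤ p) (a b : ℕ) (hab : a + b = p ^ n)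
    (hcf : ∀ d, a / p ^ d % p + b / p ^ d % p ≤ p - 1) : a = 0 ∨ a = p ^ n := by
  have hp0 : 0 < p := by omega
  have hmod : ∀ d, a % p ^ d + b % p ^ d < p ^ d := by
    intro d
    induction d with
    | zero => simp only [pow_zero]; omega
    | succ d ih =>
      have h1 : a % p ^ (d+1) = a % p ^ d + p ^ d * (a / p ^ d % p) := Nat.mod_pow_succ
      have h2 : b % p ^ (d+1) = b % p ^ d + p ^ d * (b / p ^ d % p) := Nat.mod_pow_succ
      have h3 := hcf d
      have h4 : p ^ (d+1) = p ^ d * p := pow_succ p d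
      have h5 : p ^ d * (a / p ^ d % p) + p ^ d * (b / p ^ d % p) ≤ p ^ d * (p - 1) := by
        rw [← Nat.mul_add]
        exact Nat.mul_le_mul_left _ h3
      have h6 : p ^ d * p = p ^ d * (p - 1) + p ^ d := by
        rw [← Nat.mul_succ]; congr 1; omega
      omega
  have hdiv : ∀ d, (a + b) / p ^ d = a / p ^ d + b / p ^ d := by
    intro d
    have h1 := Nat.div_add_mod a (p ^ d)
    have h2 := Nat.div_add_mod b (p ^ d)
    have : a + b = p ^ d * (a / p ^ d + b / p ^ d) + (a % p ^ d + b % p ^ d) := by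
      rw [Nat.mul_add]; omega
    rw [this, Nat.mul_add_div (pow_pos hp0 d), Nat.div_eq_of_lt (hmod d), add_zero]
  have hd0 : ∀ d < n, a / p ^ d % p = 0 := by
    intro d hd
    have h1 : (a + b) / p ^ d % p = (a / p ^ d % p + b / p ^ d % p) % p := by
      rw [hdiv d, Nat.add_mod]
    have h2 : (a / p ^ d % p + b / p ^ d % p) % p = a / p ^ d % p + b / p ^ d % p :=
      Nat.mod_eq_of_lt (by have := hcf d; omega)
    have h3 : (a + b) / p ^ d = p ^ (n - d) := by
      rw [hab, Nat.pow_div (le_of_lt hd) hp0]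
    rw [h3] at h1
    have h4 : p ^ (n - d) % p = 0 := by
      have : n - d = (n - d - 1) + 1 := by omega
      rw [this, pow_succ, Nat.mul_mod_left]
    have := hcf d
    omega
  have hdvd : ∀ d ≤ n, p ^ d ∣ a := by
    intro d hd
    induction d with
    | zero => simp
    | succ d ih =>
      have hdn : d ≤ n := by omega
      have h1 : p ∣ a / p ^ d := Nat.dvd_of_mod_eq_zero (hd0 d (by omega))
      obtain ⟨k, hk⟩ := h1
      have h2 : a = p ^ d * (a / p ^ d) := (Nat.mul_div_cancel' (ih hdn)).symm
      exact ⟨k, by rw [h2, hk, pow_succ]; ring⟩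
  rcases Nat.lt_or_ge a (p ^ n) with h | h
  · exact Or.inl (Nat.eq_zero_of_dvd_of_lt (hdvd n le_rfl) h)
  · right; omega

/-- digits of `p ^ β` are at most `p - 1`. -/
private lemma pow_digit_le (p β d : ℕ) (hp : 2 ≤ p) : p ^ β / p ^ d % p ≤ p - 1 := by
  have := Nat.mod_lt (p ^ β / p ^ d) (show 0 < p by omega)
  omega

/-- if `m_0, …, m_{p^β}` are naturals summing to `p^α`, the sum is
carry-free in base `p`, and every index `j` with `m_j ≠ 0` is a carry-free summand
of `p^β`, then all the weight is concentrated at a single index `i ∈ {0, p^β}`,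
with `m_i = p^α`; consequently the set of possible values of `Σ_j j·m_j` is
exactly `{0, p^(α+β)}`. -/
theorem stmt4 (p α β : ℕ) (hp : p.Prime) (hβ : 1 ≤ β) :
    (∀ m : Fin (p ^ β + 1) → ℕ,
      (∑ j, m j = p ^ α) →
      (∀ d : ℕ, ∑ j, (m j / p ^ d % p) ≤ p - 1) →
      (∀ j : Fin (p ^ β + 1), m j ≠ 0 →
        ∀ d : ℕ, (j : ℕ) / p ^ d % p + (p ^ β - (j : ℕ)) / p ^ d % p ≤ p - 1) →
      ∃ i : Fin (p ^ β + 1), ((i : ℕ) = 0 ∨ (i : ℕ) = p ^ β) ∧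
        m i = p ^ α ∧ ∀ j, j ≠ i → m j = 0)
    ∧
    {x : ℕ | ∃ m : Fin (p ^ β + 1) → ℕ,
        (∑ j, m j = p ^ α) ∧
        (∀ d : ℕ, ∑ j, (m j / p ^ d % p) ≤ p - 1) ∧
        (∀ j : Fin (p ^ β + 1), m j ≠ 0 →
          ∀ d : ℕ, (j : ℕ) / p ^ d % p + (p ^ β - (j : ℕ)) / p ^ d % p ≤ p - 1) ∧
        x = ∑ j : Fin (p ^ β + 1), (j : ℕ) * m j}
      = {0, p ^ (α + β)} := by
  have hp2 : 2 ≤ p := hp.two_le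
  have hpow : 2 ≤ p ^ β := le_trans hp2 (Nat.le_self_pow (by omega) p)
  set N := p ^ β with hN
  have hi0 : (0 : ℕ) < N + 1 := by omega
  have i0 : Fin (N + 1) := ⟨0, hi0⟩
  let iL : Fin (N + 1) := Fin.last N
  have hi0L : (⟨0, hi0⟩ : Fin (N + 1)) ≠ iL := by
    intro h
    have : (0 : ℕ) = N := congrArg Fin.val h
    omega
  -- Part 1
  have part1 : ∀ m : Fin (N + 1) → ℕ,
      (∑ j, m j = p ^ α) →
      (∀ d : ℕ, ∑ j, (m j / p ^ d % p) ≤ p - 1) →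
      (∀ j : Fin (N + 1), m j ≠ 0 →
        ∀ d : ℕ, (j : ℕ) / p ^ d % p + (N - (j : ℕ)) / p ^ d % p ≤ p - 1) →
      ∃ i : Fin (N + 1), ((i : ℕ) = 0 ∨ (i : ℕ) = N) ∧
        m i = p ^ α ∧ ∀ j, j ≠ i → m j = 0 := by
    intro m hsum hcf hsupp
    -- support is contained in {0, N}
    have hzero : ∀ j : Fin (N + 1), (j : ℕ) ≠ 0 → (j : ℕ) ≠ N → m j = 0 := by
      intro j hj0 hjN
      by_contra hmj
      have hjle : (j : ℕ) ≤ N := by omega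
      have := carry_lemma p β hp2 (j : ℕ) (N - (j : ℕ)) (by omega) (hsupp j hmj)
      rw [← hN] at this
      omega
    have hsub : ({⟨0, hi0⟩, iL} : Finset (Fin (N + 1))) ⊆ Finset.univ :=
      Finset.subset_univ _
    have hout : ∀ j : Fin (N + 1), j ∉ ({⟨0, hi0⟩, iL} : Finset (Fin (N + 1))) → m j = 0 := by
      intro j hj
      simp only [Finset.mem_insert, Finset.mem_singleton] at hj
      push_neg at hj
      apply hzero
      · intro h; exact hj.1 (Fin.ext h)
      · intro h; exact hj.2 (Fin.ext h)
    have hAB : m ⟨0, hi0⟩ + m iL = p ^ α := by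
      rw [← hsum, ← Finset.sum_pair hi0L]
      exact Finset.sum_subset hsub (fun j _ hj => hout j hj)
    have hABcf : ∀ d, m ⟨0, hi0⟩ / p ^ d % p + m iL / p ^ d % p ≤ p - 1 := by
      intro d
      calc m ⟨0, hi0⟩ / p ^ d % p + m iL / p ^ d % p
          = ∑ j ∈ ({⟨0, hi0⟩, iL} : Finset (Fin (N + 1))), m j / p ^ d % p :=
            (Finset.sum_pair (f := fun j => m j / p ^ d % p) hi0L).symm
        _ ≤ ∑ j, m j / p ^ d % p := Finset.sum_le_sum_of_subset hsub
        _ ≤ p - 1 := hcf d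
    rcases carry_lemma p α hp2 _ _ hAB hABcf with h0 | h0
    · refine ⟨iL, Or.inr rfl, by omega, fun j hj => ?_⟩
      rcases Finset.mem_insert.mp (Finset.mem_insert_self j {iL}) with _ | _
      · by_cases hj0 : j = (⟨0, hi0⟩ : Fin (N + 1))
        · rw [hj0]; exact h0
        · apply hzero
          · intro h; exact hj0 (Fin.ext h)
          · intro h; exact hj (Fin.ext h)
      · by_cases hj0 : j = (⟨0, hi0⟩ : Fin (N + 1))
        · rw [hj0]; exact h0
        · apply hzero
          · intro h; exact hj0 (Fin.ext h)
          · intro h; exact hj (Fin.ext h)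
    · refine ⟨⟨0, hi0⟩, Or.inl rfl, h0, fun j hj => ?_⟩
      by_cases hjL : j = iL
      · rw [hjL]; omega
      · apply hzero
        · intro h; exact hj (Fin.ext h)
        · intro h; exact hjL (Fin.ext h)
  refine ⟨part1, ?_⟩
  -- Part 2
  ext x
  simp only [Set.mem_setOf_eq, Set.mem_insert_iff, Set.mem_singleton_iff]
  constructor
  · rintro ⟨m, hsum, hcf, hsupp, hx⟩
    obtain ⟨i, hi, hmi, hrest⟩ := part1 m hsum hcf hsupp
    have hxval : x = (i : ℕ) * p ^ α := by
      rw [hx, Finset.sum_eq_single_of_mem i (Finset.mem_univ i)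
        (fun j _ hj => by rw [hrest j hj, Nat.mul_zero]), hmi]
    rcases hi with h | h
    · left; rw [hxval, h]; ring
    · right; rw [hxval, h, hN, pow_add]; ring
  · intro hx
    rcases hx with h | h
    · -- x = 0 : mass at index 0
      refine ⟨fun j => if j = (⟨0, hi0⟩ : Fin (N + 1)) then p ^ α else 0, ?_, ?_, ?_, ?_⟩
      · rw [Finset.sum_ite_eq' Finset.univ]; simp
      · intro d
        have : ∀ j : Fin (N + 1),
            (if j = (⟨0, hi0⟩ : Fin (N + 1)) then p ^ α else 0) / p ^ d % p
            = if j = (⟨0, hi0⟩ : Fin (N + 1)) then p ^ α / p ^ d % p else 0 := by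
          intro j; split <;> simp
        rw [Finset.sum_congr rfl (fun j _ => this j), Finset.sum_ite_eq' Finset.univ]
        simp only [Finset.mem_univ, if_true]
        exact pow_digit_le p α d hp2
      · intro j hj d
        have hj0 : j = (⟨0, hi0⟩ : Fin (N + 1)) := by
          by_contra hc; exact hj (by simp only [if_neg hc])
        rw [hj0]
        simp only [Nat.sub_zero, Nat.zero_div, Nat.zero_mod, Nat.zero_add]
        exact pow_digit_le p β d hp2
      · rw [h, Finset.sum_eq_single_of_mem (⟨0, hi0⟩ : Fin (N + 1)) (Finset.mem_univ _)
          (fun j _ hj => by simp only [if_neg hj, Nat.mul_zero])]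
        show (0 : ℕ) = (0 : ℕ) * (if (⟨0, hi0⟩ : Fin (N + 1)) = ⟨0, hi0⟩ then p ^ α else 0)
        rw [Nat.zero_mul]
    · -- x = p^(α+β) : mass at index N
      refine ⟨fun j => if j = iL then p ^ α else 0, ?_, ?_, ?_, ?_⟩
      · rw [Finset.sum_ite_eq' Finset.univ]; simp
      · intro d
        have : ∀ j : Fin (N + 1),
            (if j = iL then p ^ α else 0) / p ^ d % p
            = if j = iL then p ^ α / p ^ d % p else 0 := by
          intro j; split <;> simp
        rw [Finset.sum_congr rfl (fun j _ => this j), Finset.sum_ite_eq' Finset.univ]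
        simp only [Finset.mem_univ, if_true]
        exact pow_digit_le p α d hp2
      · intro j hj d
        have hjL : j = iL := by
          by_contra hc; exact hj (by simp only [if_neg hc])
        rw [hjL]
        have : (iL : ℕ) = N := rfl
        rw [this]
        simp only [Nat.sub_self, Nat.zero_div, Nat.zero_mod, Nat.add_zero]
        exact pow_digit_le p β d hp2
      · rw [h, Finset.sum_eq_single_of_mem iL (Finset.mem_univ _)
          (fun j _ hj => by simp only [if_neg hj, Nat.mul_zero])]
        show p ^ (α + β) = N * (if iL = iL then p ^ α else 0)
        rw [if_pos rfl, hN, pow_add]; ring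
end

section
/- Let K be a field, E = ⟨X, Y⟩ the natural 2-dimensional representation of SL_2(K), and l ≥ 0. Suppose every a with 0 ≤ a ≤ l is a carry-free summand of l in base p = char K (automatic if char K = 0). Then the composition of the inclusion Sym_l E ↪ E^{⊗l} with the quotient E^{⊗l} ↠ Sym^l E, which sends the symmetrized tensor (X^{⊗(l-a)} ⊗ Y^{⊗a})_sym to C(l,a)·X^{l-a}Y^a, is an isomorphism of SL_2(K)-representations Sym_l E ≅ Sym^l E. -/
open scoped TensorProduct
open MvPolynomial

noncomputable section

variable (K : Type*) [Field K]

/-- The basis vector `X = (1,0)` of the natural module `E = K²` of `SL_2(K)`. -/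
def Xv : Fin 2 → K := Pi.single 0 1

/-- The basis vector `Y = (0,1)` of `E = K²`. -/
def Yv : Fin 2 → K := Pi.single 1 1

/-- The symmetrized tensor `(X^{⊗(l-a)} ⊗ Y^{⊗a})_sym ∈ E^{⊗l}`: the sum of all
pure tensors with `l - a` factors `X` and `a` factors `Y`; these form the
canonical basis of `Sym_l E` as `a` ranges over `0,…,l`. -/
def symT (l a : ℕ) : ⨂[K]^l (Fin 2 → K) :=
  ∑ s ∈ Finset.univ.powersetCard a,
    PiTensorProduct.tprod K (fun t : Fin l => if t ∈ s then Yv K else Xv K)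

/-- The invariant symmetric power `Sym_l E`: `S_l`-invariants of `E^{⊗l}` under
place permutation. -/
def SymInv (W : Type*) [AddCommGroup W] [Module K W] (l : ℕ) :
    Submodule K (⨂[K]^l W) :=
  ⨅ σ : Equiv.Perm (Fin l),
    LinearMap.eqLocus (PiTensorProduct.reindex K (fun _ => W) σ).toLinearMap LinearMap.id

/-- The inclusion of `E` into linear polynomials: `v ↦ v₀·x₀ + v₁·x₁`. -/
def toPoly : (Fin 2 → K) →ₗ[K] MvPolynomial (Fin 2) K :=
  (LinearMap.proj 0).smulRight (X 0) + (LinearMap.proj 1).smulRight (X 1)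

/-- The composite `E^{⊗l} ↠ Sym^l E` of the quotient map, with `Sym^l E`
realised as the degree-`l` homogeneous polynomials in `x₀, x₁`:
`v₁ ⊗ ⋯ ⊗ v_l ↦ ∏ⱼ (vⱼ₀ x₀ + vⱼ₁ x₁)`. -/
def quotMap (l : ℕ) : (⨂[K]^l (Fin 2 → K)) →ₗ[K] MvPolynomial (Fin 2) K :=
  PiTensorProduct.lift
    ((MultilinearMap.mkPiAlgebraFin K l (MvPolynomial (Fin 2) K)).compLinearMap
      (fun _ => toPoly K))

/-- The diagonal action of `g ∈ SL_2(K)` on `E^{⊗l}`. -/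
def Tmap (l : ℕ) (g : Matrix.SpecialLinearGroup (Fin 2) K) :
    (⨂[K]^l (Fin 2 → K)) →ₗ[K] ⨂[K]^l (Fin 2 → K) :=
  PiTensorProduct.map
    (fun _ : Fin l => Matrix.mulVecLin (↑g : Matrix (Fin 2) (Fin 2) K))

/-- The action of `g ∈ SL_2(K)` on polynomials (the substitution matching the
action on `E`, so that `quotMap` is equivariant). -/
def polyAct (g : Matrix.SpecialLinearGroup (Fin 2) K) :
    MvPolynomial (Fin 2) K →ₐ[K] MvPolynomial (Fin 2) K :=
  aeval (fun j : Fin 2 => ∑ i : Fin 2, (↑g : Matrix (Fin 2) (Fin 2) K) i j • X i)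

-- ===================== auxiliary machinery =====================

-- ===================== auxiliary machinery =====================

section Aux

variable {K}

lemma toPoly_apply (v : Fin 2 → K) : toPoly K v = v 0 • X 0 + v 1 • X 1 := rfl

lemma quotMap_tprod (l : ℕ) (v : Fin l → (Fin 2 → K)) :
    quotMap K l (PiTensorProduct.tprod K v) = ∏ t, toPoly K (v t) := by
  simp [quotMap, PiTensorProduct.lift.tprod, MultilinearMap.mkPiAlgebraFin_apply,
    List.prod_ofFn]

/-- basis tensors indexed by subsets -/
def bS (l : ℕ) (s : Finset (Fin l)) : ⨂[K]^l (Fin 2 → K) :=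
  PiTensorProduct.tprod K (fun t => if t ∈ s then Yv K else Xv K)

/-- coefficient functional -/
def phi (l : ℕ) (s : Finset (Fin l)) : (⨂[K]^l (Fin 2 → K)) →ₗ[K] K :=
  PiTensorProduct.lift ((MultilinearMap.mkPiAlgebraFin K l K).compLinearMap
    (fun t => LinearMap.proj (if t ∈ s then (1 : Fin 2) else 0)))

lemma phi_tprod (l : ℕ) (s : Finset (Fin l)) (v : Fin l → (Fin 2 → K)) :
    phi (K := K) l s (PiTensorProduct.tprod K v)
      = ∏ t, v t (if t ∈ s then (1 : Fin 2) else 0) := by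
  simp [phi, PiTensorProduct.lift.tprod, MultilinearMap.mkPiAlgebraFin_apply,
    List.prod_ofFn]

lemma fin2cases (x : Fin 2) : x = 0 ∨ x = 1 := by omega

lemma single_ite (l : ℕ) (s : Finset (Fin l)) (t : Fin l) :
    (Pi.single (if t ∈ s then (1 : Fin 2) else 0) (1 : K) : Fin 2 → K) =
      (if t ∈ s then Yv K else Xv K) := by
  split_ifs <;> rfl

/-- subsets of `Fin l` correspond to functions `Fin l → Fin 2` -/
def fsEquiv (l : ℕ) : Finset (Fin l) ≃ (Fin l → Fin 2) where
  toFun s t := if t ∈ s then 1 else 0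
  invFun f := Finset.univ.filter (fun t => f t = 1)
  left_inv s := by
    ext t; by_cases h : t ∈ s <;> simp [h]
  right_inv f := by
    funext t
    rcases fin2cases (f t) with h | h <;> simp [h]

lemma decomp_tprod (l : ℕ) (v : Fin l → (Fin 2 → K)) :
    PiTensorProduct.tprod K v = ∑ s : Finset (Fin l),
      (∏ t, v t (if t ∈ s then (1 : Fin 2) else 0)) • bS l s := by
  have hv : v = fun t => ∑ j : Fin 2, v t j • (Pi.single j (1 : K) : Fin 2 → K) := by
    funext t k
    fin_cases k <;> simp [Fin.sum_univ_two, Pi.single_apply]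
  calc PiTensorProduct.tprod K v
      = PiTensorProduct.tprod K
          (fun t => ∑ j : Fin 2, v t j • (Pi.single j (1 : K) : Fin 2 → K)) := by
        conv_lhs => rw [hv]
    _ = ∑ r : Fin l → Fin 2, PiTensorProduct.tprod K
          (fun t => v t (r t) • (Pi.single (r t) (1 : K) : Fin 2 → K)) :=
        MultilinearMap.map_sum _ _
    _ = ∑ r : Fin l → Fin 2, (∏ t, v t (r t)) • PiTensorProduct.tprod K
          (fun t => (Pi.single (r t) (1 : K) : Fin 2 → K)) :=
        Finset.sum_congr rfl (fun r _ => MultilinearMap.map_smul_univ _ _ _)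
    _ = ∑ s : Finset (Fin l),
          (∏ t, v t (if t ∈ s then (1 : Fin 2) else 0)) • bS l s := by
        refine (Fintype.sum_equiv (fsEquiv l) _ _ fun s => ?_).symm
        congr 1
        exact congrArg _ (_root_.funext fun t => single_ite l s t).symm

lemma decomp (l : ℕ) (x : ⨂[K]^l (Fin 2 → K)) :
    x = ∑ s : Finset (Fin l), phi l s x • bS l s := by
  induction x using PiTensorProduct.induction_on with
  | smul_tprod r v =>
      conv_lhs => rw [decomp_tprod l v]
      rw [Finset.smul_sum]
      refine Finset.sum_congr rfl fun s _ => ?_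
      rw [map_smul, phi_tprod, smul_smul, smul_eq_mul]
  | add x y hx hy =>
      simp only [map_add, add_smul, Finset.sum_add_distrib]
      rw [← hx, ← hy]

lemma phi_bS (l : ℕ) (s s' : Finset (Fin l)) :
    phi (K := K) l s (bS l s') = if s = s' then 1 else 0 := by
  rw [bS, phi_tprod]
  have hterm : ∀ t : Fin l,
      ((if t ∈ s' then Yv K else Xv K) (if t ∈ s then (1 : Fin 2) else 0)) =
        if (t ∈ s ↔ t ∈ s') then 1 else 0 := by
    intro t
    by_cases h1 : t ∈ s <;> by_cases h2 : t ∈ s' <;>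
      simp [h1, h2, Xv, Yv, Pi.single_apply]
  rw [Finset.prod_congr rfl fun t _ => hterm t]
  split_ifs with h
  · subst h; simp
  · obtain ⟨t, ht⟩ : ∃ t, ¬(t ∈ s ↔ t ∈ s') := by
      by_contra hc
      push_neg at hc
      exact h (Finset.ext fun t => hc t)
    exact Finset.prod_eq_zero (Finset.mem_univ t) (by rw [if_neg ht])

lemma symT_eq (l a : ℕ) :
    symT K l a = ∑ s ∈ Finset.univ.powersetCard a, bS l s := rfl

lemma reindex_bS (l : ℕ) (σ : Equiv.Perm (Fin l)) (s : Finset (Fin l)) :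
    PiTensorProduct.reindex K (fun _ => (Fin 2 → K)) σ (bS l s)
      = bS l (s.map σ.toEmbedding) := by
  rw [bS, PiTensorProduct.reindex_tprod]
  congr 1
  funext t
  simp [Finset.mem_map_equiv, bS]

lemma mem_SymInv_iff (l : ℕ) (x : ⨂[K]^l (Fin 2 → K)) :
    x ∈ SymInv K (Fin 2 → K) l ↔
      ∀ σ : Equiv.Perm (Fin l),
        PiTensorProduct.reindex K (fun _ => (Fin 2 → K)) σ x = x := by
  simp [SymInv, Submodule.mem_iInf, LinearMap.mem_eqLocus]

/-- the finset equiv induced by a permutation -/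
def mapPermEquiv (l : ℕ) (σ : Equiv.Perm (Fin l)) :
    Finset (Fin l) ≃ Finset (Fin l) where
  toFun s := s.map σ.toEmbedding
  invFun s := s.map σ.symm.toEmbedding
  left_inv s := by ext t; simp [Finset.mem_map_equiv]
  right_inv s := by ext t; simp [Finset.mem_map_equiv]

set_option synthInstance.maxHeartbeats 1000000 in
lemma symT_mem (l a : ℕ) : symT K l a ∈ SymInv K (Fin 2 → K) l := by
  rw [mem_SymInv_iff]
  intro σ
  rw [symT_eq, map_sum]
  rw [Finset.sum_congr rfl fun s _ => reindex_bS l σ s]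
  refine Finset.sum_equiv (mapPermEquiv l σ) (fun s => ?_) (fun s hs => ?_)
  · simp only [Finset.mem_powersetCard, Finset.subset_univ, true_and, mapPermEquiv,
      Equiv.coe_fn_mk, Finset.card_map]
  · rfl

lemma phi_reindex (l : ℕ) (σ : Equiv.Perm (Fin l)) (s : Finset (Fin l))
    (x : ⨂[K]^l (Fin 2 → K)) :
    phi (K := K) l s (PiTensorProduct.reindex K (fun _ => (Fin 2 → K)) σ x)
      = phi l (s.map σ.symm.toEmbedding) x := by
  induction x using PiTensorProduct.induction_on with
  | smul_tprod r v =>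
      rw [map_smul, map_smul, map_smul, PiTensorProduct.reindex_tprod,
        phi_tprod, phi_tprod]
      congr 1
      refine Fintype.prod_equiv σ.symm _ _ fun t => ?_
      congr 1
      simp [Finset.mem_map_equiv]
  | add x y hx hy => simp only [map_add, hx, hy]

lemma exists_perm_map (l : ℕ) (s s' : Finset (Fin l)) (h : s.card = s'.card) :
    ∃ σ : Equiv.Perm (Fin l), s.map σ.toEmbedding = s' := by
  have e : {x // x ∈ s} ≃ {x // x ∈ s'} :=
    Fintype.equivOfCardEq (by simp [Fintype.card_coe, h])
  refine ⟨e.extendSubtype, ?_⟩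
  refine Finset.eq_of_subset_of_card_le ?_ (by simp [h])
  intro t ht
  obtain ⟨u, hu, rfl⟩ := Finset.mem_map.mp ht
  exact e.extendSubtype_mem u hu

lemma phi_card_eq (l : ℕ) (x : ⨂[K]^l (Fin 2 → K)) (hx : x ∈ SymInv K (Fin 2 → K) l)
    (s s' : Finset (Fin l)) (h : s.card = s'.card) :
    phi (K := K) l s x = phi l s' x := by
  obtain ⟨σ, hσ⟩ := exists_perm_map l s s' h
  have := phi_reindex l σ.symm s x
  rw [(mem_SymInv_iff l x).mp hx] at this
  rw [this, Equiv.symm_symm, hσ]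

lemma quotMap_bS (l : ℕ) (s : Finset (Fin l)) :
    quotMap K l (bS l s) = X 0 ^ (l - s.card) * X 1 ^ s.card := by
  rw [bS, quotMap_tprod]
  have hterm : ∀ t : Fin l, toPoly K (if t ∈ s then Yv K else Xv K) =
      if t ∈ s then X 1 else X 0 := by
    intro t
    split_ifs <;> simp [toPoly_apply, Xv, Yv, Pi.single_apply]
  rw [Finset.prod_congr rfl fun t _ => hterm t, Finset.prod_ite]
  simp only [Finset.prod_const]
  rw [Finset.filter_mem_eq_inter, Finset.univ_inter]
  have : (Finset.univ.filter (fun t => t ∉ s)).card = l - s.card := by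
    rw [Finset.filter_not, Finset.filter_mem_eq_inter, Finset.univ_inter]
    simp [Finset.card_sdiff_of_subset (Finset.subset_univ s)]
  rw [this, mul_comm]


lemma quotMap_symT (l a : ℕ) :
    quotMap K l (symT K l a)
      = (l.choose a : K) • ((X 0 : MvPolynomial (Fin 2) K) ^ (l - a) * X 1 ^ a) := by
  rw [symT_eq, map_sum]
  have h : ∀ s ∈ Finset.univ.powersetCard a,
      quotMap K l (bS l s) = (X 0 : MvPolynomial (Fin 2) K) ^ (l - a) * X 1 ^ a := by
    intro s hs
    obtain ⟨-, hc⟩ := Finset.mem_powersetCard.mp hs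
    rw [quotMap_bS, hc]
  rw [Finset.sum_congr rfl h, Finset.sum_const, Finset.card_powersetCard,
    Finset.card_univ, Fintype.card_fin, ← Nat.cast_smul_eq_nsmul K]

lemma toPoly_isHomogeneous (v : Fin 2 → K) : (toPoly K v).IsHomogeneous 1 := by
  rw [toPoly_apply]
  apply MvPolynomial.IsHomogeneous.add <;>
  · rw [smul_eq_C_mul]
    simpa using (isHomogeneous_C _ _).mul (isHomogeneous_X _ _)

lemma quotMap_mem_homog (l : ℕ) (x : ⨂[K]^l (Fin 2 → K)) :
    quotMap K l x ∈ homogeneousSubmodule (Fin 2) K l := by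
  induction x using PiTensorProduct.induction_on with
  | smul_tprod r v =>
      rw [map_smul, quotMap_tprod]
      refine Submodule.smul_mem _ _ ?_
      rw [mem_homogeneousSubmodule]
      have h := MvPolynomial.IsHomogeneous.prod Finset.univ (fun t => toPoly K (v t))
        (fun _ => 1) (fun t _ => toPoly_isHomogeneous (v t))
      simpa using h
  | add x y hx hy => rw [map_add]; exact Submodule.add_mem _ hx hy

lemma surj_aux (l : ℕ) (hchoose : ∀ a ≤ l, ((l.choose a : K)) ≠ 0)
    (p : MvPolynomial (Fin 2) K) (hp : p ∈ homogeneousSubmodule (Fin 2) K l) :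
    p ∈ Submodule.map (quotMap K l) (SymInv K (Fin 2 → K) l) := by
  rw [mem_homogeneousSubmodule] at hp
  rw [p.as_sum]
  refine Submodule.sum_mem _ fun d hd => ?_
  have hdeg : d 0 + d 1 = l := by
    have h1 : (Finsupp.weight 1) d = l := hp (MvPolynomial.mem_support_iff.mp hd)
    have h2 : d.degree = l := by
      rw [Finsupp.degree_eq_weight_one]; exact_mod_cast h1
    rw [← h2, Finsupp.degree_apply,
      Finset.sum_subset (Finset.subset_univ d.support)
        (fun i _ hi => Finsupp.notMem_support_iff.mp hi),
      Fin.sum_univ_two]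
  have ha : d 1 ≤ l := by omega
  have hmon : (monomial d) (coeff d p)
      = coeff d p • ((X 0 : MvPolynomial (Fin 2) K) ^ (l - d 1) * X 1 ^ d 1) := by
    have hd0 : l - d 1 = d 0 := by omega
    have hds : (Finsupp.single (0 : Fin 2) (d 0) + Finsupp.single 1 (d 1)) = d := by
      ext i; fin_cases i <;> simp [Finsupp.single_apply]
    rw [hd0, smul_eq_C_mul, X_pow_eq_monomial, X_pow_eq_monomial, monomial_mul,
      one_mul, C_mul_monomial, mul_one, hds]
  rw [hmon]
  refine Submodule.smul_mem _ _ ?_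
  refine ⟨((l.choose (d 1) : K))⁻¹ • symT K l (d 1),
    Submodule.smul_mem _ _ (symT_mem l (d 1)), ?_⟩
  rw [map_smul, quotMap_symT l (d 1), smul_smul,
    inv_mul_cancel₀ (hchoose (d 1) ha), one_smul]

lemma inj_aux (l : ℕ) (hchoose : ∀ a ≤ l, ((l.choose a : K)) ≠ 0)
    (x : ⨂[K]^l (Fin 2 → K)) (hx : x ∈ SymInv K (Fin 2 → K) l)
    (h0 : quotMap K l x = 0) : x = 0 := by
  have hq : ∀ s₀ : Finset (Fin l), phi l s₀ x = 0 := by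
    intro s₀
    have ha₀ : s₀.card ≤ l := by simpa using Finset.card_le_univ s₀
    have hrep : quotMap K l x = ∑ s : Finset (Fin l), phi l s x •
        ((X 0 : MvPolynomial (Fin 2) K) ^ (l - s.card) * X 1 ^ s.card) := by
      conv_lhs => rw [decomp l x, map_sum]
      exact Finset.sum_congr rfl fun s _ => by rw [map_smul, quotMap_bS]
    have heq : (0 : MvPolynomial (Fin 2) K) = ∑ s : Finset (Fin l), phi l s x •
        ((X 0 : MvPolynomial (Fin 2) K) ^ (l - s.card) * X 1 ^ s.card) := by
      rw [← hrep, h0]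
    have hmc : ∀ s : Finset (Fin l),
        coeff (Finsupp.single 0 (l - s₀.card) + Finsupp.single 1 s₀.card)
          ((X 0 : MvPolynomial (Fin 2) K) ^ (l - s.card) * X 1 ^ s.card)
        = if s.card = s₀.card then 1 else 0 := by
      intro s
      rw [X_pow_eq_monomial, X_pow_eq_monomial, monomial_mul, coeff_monomial, mul_one]
      by_cases h : s.card = s₀.card
      · rw [if_pos h, if_pos]; rw [h]
      · rw [if_neg h, if_neg]
        intro hcon
        have h1 := DFunLike.congr_fun hcon (1 : Fin 2)
        simp [Finsupp.single_apply] at h1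
        exact h h1
    have hc := congrArg (coeff (Finsupp.single 0 (l - s₀.card) + Finsupp.single 1 s₀.card)) heq
    rw [coeff_zero, coeff_sum] at hc
    simp only [coeff_smul, hmc, smul_eq_mul, mul_ite, mul_one, mul_zero] at hc
    rw [← Finset.sum_filter] at hc
    have hflt : (Finset.univ.filter (fun s : Finset (Fin l) => s.card = s₀.card))
        = Finset.univ.powersetCard s₀.card := by
      rw [Finset.powersetCard_eq_filter, Finset.powerset_univ]
    have hcongr : ∀ s ∈ Finset.univ.filter (fun s : Finset (Fin l) => s.card = s₀.card),
        phi (K := K) l s x = phi l s₀ x := by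
      intro s hs
      exact phi_card_eq l x hx s s₀ (Finset.mem_filter.mp hs).2
    rw [Finset.sum_congr rfl hcongr, Finset.sum_const, hflt, Finset.card_powersetCard,
      Finset.card_univ, Fintype.card_fin, ← Nat.cast_smul_eq_nsmul K, smul_eq_mul] at hc
    exact (mul_eq_zero.mp hc.symm).resolve_left (hchoose s₀.card ha₀)
  rw [decomp l x]
  simp [hq]

lemma toPoly_mulVecLin (g : Matrix (Fin 2) (Fin 2) K) (v : Fin 2 → K) :
    toPoly K (g.mulVecLin v)
      = aeval (fun j : Fin 2 => ∑ i : Fin 2, g i j • X i) (toPoly K v) := by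
  rw [toPoly_apply, toPoly_apply]
  simp only [map_add, map_smul, aeval_X, Matrix.mulVecLin_apply, Matrix.mulVec,
    dotProduct, Fin.sum_univ_two, smul_add, smul_smul]
  simp only [smul_eq_C_mul, map_mul, map_add]
  ring

lemma equivar (l : ℕ) (g : Matrix.SpecialLinearGroup (Fin 2) K)
    (x : ⨂[K]^l (Fin 2 → K)) :
    quotMap K l (Tmap K l g x) = polyAct K g (quotMap K l x) := by
  induction x using PiTensorProduct.induction_on with
  | smul_tprod r v =>
      simp only [map_smul, Tmap, PiTensorProduct.map_tprod, quotMap_tprod, map_prod]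
      congr 1
      exact Finset.prod_congr rfl fun t _ => toPoly_mulVecLin _ _
  | add x y hx hy => simp only [map_add, hx, hy]

end Aux

/-- if `C(l,a) ≠ 0` in `K` for all `0 ≤ a ≤ l` (i.e. every `a ≤ l`
is a carry-free summand of `l` in base `char K`; automatic in characteristic 0),
then the composition `Sym_l E ↪ E^{⊗l} ↠ Sym^l E`, which sends
`(X^{⊗(l-a)} ⊗ Y^{⊗a})_sym ↦ C(l,a)·X^{l-a}Y^a`, is an isomorphism of
`SL_2(K)`-representations `Sym_l E ≅ Sym^l E` (realising `Sym^l E` as the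
homogeneous polynomials of degree `l`). -/
theorem stmt10 (l : ℕ) (hchoose : ∀ a ≤ l, ((l.choose a : K)) ≠ 0) :
    (∀ a ≤ l, quotMap K l (symT K l a)
        = (l.choose a : K) • ((X 0 : MvPolynomial (Fin 2) K) ^ (l - a) * X 1 ^ a)) ∧
    Set.BijOn (quotMap K l) (SymInv K (Fin 2 → K) l : Set (⨂[K]^l (Fin 2 → K)))
      ((homogeneousSubmodule (Fin 2) K l : Submodule K (MvPolynomial (Fin 2) K)) : Set (MvPolynomial (Fin 2) K)) ∧
    (∀ (g : Matrix.SpecialLinearGroup (Fin 2) K) (x : ⨂[K]^l (Fin 2 → K)),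
      quotMap K l (Tmap K l g x) = polyAct K g (quotMap K l x)) := by
  refine ⟨fun a _ => quotMap_symT l a, ⟨?_, ?_, ?_⟩, fun g x => equivar l g x⟩
  · exact fun x _ => quotMap_mem_homog l x
  · intro x hx y hy h
    have h0 := inj_aux l hchoose (x - y) (Submodule.sub_mem _ hx hy)
      (by rw [map_sub, h, sub_self])
    exact sub_eq_zero.mp h0
  · intro p hp
    obtain ⟨x, hx, hqx⟩ := surj_aux l hchoose p hp
    exact ⟨x, hx, hqx⟩


end
end

section
/- Let p be a prime, l, m ≥ 0. The set D = { Σ_{j=0}^l j·m_j : m_0,…,m_l ∈ ℕ, m_0 + ⋯ + m_l = m, and the sum m_0 + ⋯ + m_l is carry-free in base p, and every j with m_j ≠ 0 satisfies C(l,j) ≢ 0 mod p }. For m = p and l = p^ε with ε ≥ 1, D = {0, p^{ε+1}}. -/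
/-- A single-spike witness: `m j = p` at `j = c` and `0` elsewhere. -/
lemma spike_mem (p n : ℕ) (hp : p.Prime) (c : Fin (n + 1))
    (hc : Nat.choose n (c : ℕ) % p ≠ 0) :
    ∃ m : Fin (n + 1) → ℕ,
        (∑ j, m j = p) ∧
        (∀ d : ℕ, ∑ j, (m j / p ^ d % p) ≤ p - 1) ∧
        (∀ j : Fin (n + 1), m j ≠ 0 → Nat.choose n (j : ℕ) % p ≠ 0) ∧
        (c : ℕ) * p = ∑ j : Fin (n + 1), (j : ℕ) * m j := by
  have hp2 := hp.two_le
  refine ⟨fun j => if j = c then p else 0, ?_, ?_, ?_, ?_⟩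
  · simp [Finset.sum_ite_eq']
  · intro d
    have : ∑ j : Fin (n + 1), ((if j = c then p else 0) / p ^ d % p)
        = p / p ^ d % p := by
      rw [Finset.sum_eq_single c]
      · simp
      · intro b _ hb; simp [hb]
      · simp
    rw [this]
    cases d with
    | zero => simp [Nat.mod_self]
    | succ d =>
        have h1 : p / p ^ (d + 1) ≤ 1 := by
          calc p / p ^ (d + 1) ≤ p / p :=
                Nat.div_le_div_left (Nat.le_self_pow (by omega) p) hp.pos
            _ = 1 := Nat.div_self hp.pos
        have := Nat.mod_le (p / p ^ (d + 1)) p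
        omega
  · intro j hj
    by_cases h : j = c
    · subst h; exact hc
    · simp [h] at hj
  · rw [Finset.sum_eq_single c]
    · simp
    · intro b _ hb; simp [hb]
    · simp

/-- for `m = p` and `l = p^ε` (`ε ≥ 1`), the defect set
`D = { Σ_j j·m_j : Σ m_j = p, the sum m_0 + ⋯ + m_l is carry-free in base p,
and C(l,j) ≢ 0 mod p whenever m_j ≠ 0 }` equals `{0, p^{ε+1}}`. -/
theorem stmt17 (p ε : ℕ) (hp : p.Prime) (hε : 1 ≤ ε) :
    {x : ℕ | ∃ m : Fin (p ^ ε + 1) → ℕ,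
        (∑ j, m j = p) ∧
        (∀ d : ℕ, ∑ j, (m j / p ^ d % p) ≤ p - 1) ∧
        (∀ j : Fin (p ^ ε + 1), m j ≠ 0 → Nat.choose (p ^ ε) (j : ℕ) % p ≠ 0) ∧
        x = ∑ j : Fin (p ^ ε + 1), (j : ℕ) * m j}
      = {0, p ^ (ε + 1)} := by
  have hp2 := hp.two_le
  set n := p ^ ε with hn
  have hn0 : 0 < n := pow_pos hp.pos ε
  have h0n : (0 : Fin (n + 1)) ≠ Fin.last n := by
    simp [Fin.ext_iff]; omega
  ext x
  simp only [Set.mem_setOf_eq, Set.mem_insert_iff, Set.mem_singleton_iff]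
  constructor
  · rintro ⟨m, hsum, hcf, hsupp, rfl⟩
    have hsupp' : ∀ j : Fin (n + 1), j ≠ 0 → j ≠ Fin.last n → m j = 0 := by
      intro j hj0 hjn
      by_contra h
      have hd : p ∣ n.choose j := by
        apply Nat.Prime.dvd_choose_pow hp
        · intro h0; exact hj0 (Fin.ext (by simp [h0]))
        · intro hc
          exact hjn (by apply Fin.ext; simpa using hc)
      obtain ⟨c, hc⟩ := hd
      exact hsupp j h (by simp [hc, Nat.mul_mod_right])
    have hred : ∀ f : Fin (n + 1) → ℕ, (∀ j, m j = 0 → f j = 0) →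
        ∑ j, f j = f 0 + f (Fin.last n) := by
      intro f hf
      rw [← Finset.sum_subset (Finset.subset_univ {0, Fin.last n})]
      · rw [Finset.sum_pair h0n]
      · intro j _ hj
        simp only [Finset.mem_insert, Finset.mem_singleton] at hj
        push_neg at hj
        exact hf j (hsupp' j hj.1 hj.2)
    have hsum' : m 0 + m (Fin.last n) = p := by
      rw [← hred m (fun j h => h)]; exact hsum
    have hval : ∑ j : Fin (n + 1), (j : ℕ) * m j = n * m (Fin.last n) := by
      rw [hred (fun j => (j : ℕ) * m j) (fun j h => by simp [h])]
      simp
    have hcf0 : m 0 % p + m (Fin.last n) % p ≤ p - 1 := by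
      have := hcf 0
      rwa [hred (fun j => m j / p ^ 0 % p) (fun j h => by simp [h]),
        pow_zero, Nat.div_one, Nat.div_one] at this
    rcases Nat.eq_zero_or_pos (m (Fin.last n)) with h | h
    · left; rw [hval, h, mul_zero]
    rcases Nat.eq_zero_or_pos (m 0) with h0 | h0
    · right
      have hml : m (Fin.last n) = p := by omega
      rw [hval, hml, pow_succ]
    · exfalso
      have hm0 : m 0 < p := by omega
      have hmN : m (Fin.last n) < p := by omega
      rw [Nat.mod_eq_of_lt hm0, Nat.mod_eq_of_lt hmN] at hcf0
      omega
  · rintro (rfl | rfl)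
    · obtain ⟨m, h1, h2, h3, h4⟩ := spike_mem p n hp 0 (by simp; omega)
      exact ⟨m, h1, h2, h3, by simpa using h4⟩
    · obtain ⟨m, h1, h2, h3, h4⟩ := spike_mem p n hp (Fin.last n) (by simp; omega)
      refine ⟨m, h1, h2, h3, ?_⟩
      rw [← h4]
      simp [hn, pow_succ]
end

section
/- Let p be a prime, K a field of characteristic p with |K| > 1 + 2·2^{ε+1} where p = 2 and ε > 1 (so K = 𝔽_{2^f} large enough). In Sym^{2^ε} Sym^2 E, the K-span of the images under all M_γ (γ ∈ K) of the 0-weight vectors (X^2)^{2^{ε-1}-a}·(XY)^{2a}·(Y^2)^{2^{ε-1}-a} contains only weight vectors of weights divisible by 4. -/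
open MvPolynomial

private lemma pow_wh {K : Type*} [Field K] {w : Fin 3 → ZMod 2}
    {φ : MvPolynomial (Fin 3) K} (h : φ.IsWeightedHomogeneous w 0) (n : ℕ) :
    (φ ^ n).IsWeightedHomogeneous w 0 := by
  induction n with
  | zero => simpa using isWeightedHomogeneous_one K w
  | succ n ih =>
    rw [pow_succ]
    simpa using ih.mul h

/-- char 2. Model `Sym^{2^ε} Sym^2 E` as polynomials in the three
variables `u = X², v = XY, w = Y²` (variables `X 0, X 1, X 2`), on which
`M_γ = [[1,0],[γ,1]]` acts by the substitution `u ↦ u + γ²w`, `v ↦ v + γw`,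
`w ↦ w`.  The weight of a monomial `u^a v^b w^c` is `2(a - c)`.  The claim: every
element of the `K`-span of the images under all `M_γ` (`γ ∈ K`) of the `0`-weight
vectors `u^{2^{ε-1}-a} v^{2a} w^{2^{ε-1}-a}` has all its monomials of weight
divisible by `4`, i.e. with `a + c` even. -/
theorem stmt19 (K : Type*) [Field K] [CharP K 2] (ε : ℕ) (hε : 1 < ε)
    (hcard : ((1 + 2 * 2 ^ (ε + 1) : ℕ) : Cardinal) < Cardinal.mk K) :
    ∀ x ∈ Submodule.span K
      {y : MvPolynomial (Fin 3) K | ∃ (γ : K) (a : ℕ), a ≤ 2 ^ (ε - 1) ∧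
        y = aeval
              ![X 0 + γ ^ 2 • X 2, X 1 + γ • X 2, (X 2 : MvPolynomial (Fin 3) K)]
              ((X 0 : MvPolynomial (Fin 3) K) ^ (2 ^ (ε - 1) - a)
                * X 1 ^ (2 * a) * X 2 ^ (2 ^ (ε - 1) - a))},
      ∀ μ ∈ x.support, Even (μ 0 + μ 2) := by
  classical
  set w : Fin 3 → ZMod 2 := ![1, 0, 1] with hw
  let Msub : Submodule K (MvPolynomial (Fin 3) K) :=
    { carrier := {p | ∀ μ ∈ p.support, Even (μ 0 + μ 2)}
      zero_mem' := by simp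
      add_mem' := by
        intro p q hp hq μ hμ
        rcases Finset.mem_union.1 (MvPolynomial.support_add hμ) with h | h
        exacts [hp μ h, hq μ h]
      smul_mem' := by
        intro c p hp μ hμ
        exact hp μ (MvPolynomial.support_smul hμ) }
  intro x hx
  have hle : Submodule.span K
      {y : MvPolynomial (Fin 3) K | ∃ (γ : K) (a : ℕ), a ≤ 2 ^ (ε - 1) ∧
        y = aeval
              ![X 0 + γ ^ 2 • X 2, X 1 + γ • X 2, (X 2 : MvPolynomial (Fin 3) K)]
              ((X 0 : MvPolynomial (Fin 3) K) ^ (2 ^ (ε - 1) - a)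
                * X 1 ^ (2 * a) * X 2 ^ (2 ^ (ε - 1) - a))} ≤ Msub := by
    rw [Submodule.span_le]
    rintro y ⟨γ, a, ha, rfl⟩
    set m := 2 ^ (ε - 1) - a with hm
    have hy : aeval
              ![X 0 + γ ^ 2 • X 2, X 1 + γ • X 2, (X 2 : MvPolynomial (Fin 3) K)]
              ((X 0 : MvPolynomial (Fin 3) K) ^ m * X 1 ^ (2 * a) * X 2 ^ m)
        = ((X 0 + γ ^ 2 • X 2) * X 2) ^ m
            * ((X 1 + γ • X 2 : MvPolynomial (Fin 3) K) ^ 2) ^ a := by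
      simp only [map_mul, map_pow, aeval_X, Matrix.cons_val_zero, Matrix.cons_val_one,
        Matrix.head_cons, Matrix.cons_val_two, Matrix.tail_cons]
      rw [mul_pow, ← pow_mul, mul_comm (2 : ℕ) a]
      ring
    -- the square in char 2
    have hB2 : (X 1 + γ • X 2 : MvPolynomial (Fin 3) K) ^ 2
        = X 1 ^ 2 + γ ^ 2 • (X 2 : MvPolynomial (Fin 3) K) ^ 2 := by
      have := add_pow_char (p := 2) (X 1 : MvPolynomial (Fin 3) K) (γ • X 2)
      rw [this, smul_pow]
    -- weighted homogeneity facts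
    have hX0 : (X 0 : MvPolynomial (Fin 3) K).IsWeightedHomogeneous w 1 := by
      simpa [hw] using isWeightedHomogeneous_X K w 0
    have hX1 : (X 1 : MvPolynomial (Fin 3) K).IsWeightedHomogeneous w 0 := by
      simpa [hw] using isWeightedHomogeneous_X K w 1
    have hX2 : (X 2 : MvPolynomial (Fin 3) K).IsWeightedHomogeneous w 1 := by
      simpa [hw] using isWeightedHomogeneous_X K w 2
    have hA : ((X 0 + γ ^ 2 • X 2 : MvPolynomial (Fin 3) K)).IsWeightedHomogeneous w 1 := by
      refine hX0.add ?_
      have : (γ ^ 2 • X 2 : MvPolynomial (Fin 3) K)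
          ∈ weightedHomogeneousSubmodule K w 1 :=
        Submodule.smul_mem _ _ ((mem_weightedHomogeneousSubmodule _ _ _ _).2 hX2)
      exact (mem_weightedHomogeneousSubmodule _ _ _ _).1 this
    have hAX2 : (((X 0 + γ ^ 2 • X 2) * X 2 : MvPolynomial (Fin 3) K)).IsWeightedHomogeneous
        w 0 := by
      have := hA.mul hX2
      have h11 : (1 : ZMod 2) + 1 = 0 := by decide
      rwa [h11] at this
    have hBsq : ((X 1 + γ • X 2 : MvPolynomial (Fin 3) K) ^ 2).IsWeightedHomogeneous w 0 := by
      rw [hB2]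
      refine IsWeightedHomogeneous.add ?_ ?_
      · have := hX1.mul hX1
        rw [add_zero] at this
        rw [sq]
        exact this
      · have h2 : ((X 2 : MvPolynomial (Fin 3) K) ^ 2).IsWeightedHomogeneous w 0 := by
          have := hX2.mul hX2
          have h11 : (1 : ZMod 2) + 1 = 0 := by decide
          rw [h11] at this
          rw [sq]
          exact this
        have : (γ ^ 2 • (X 2 : MvPolynomial (Fin 3) K) ^ 2)
            ∈ weightedHomogeneousSubmodule K w 0 :=
          Submodule.smul_mem _ _ ((mem_weightedHomogeneousSubmodule _ _ _ _).2 h2)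
        exact (mem_weightedHomogeneousSubmodule _ _ _ _).1 this
    have hP : (aeval
              ![X 0 + γ ^ 2 • X 2, X 1 + γ • X 2, (X 2 : MvPolynomial (Fin 3) K)]
              ((X 0 : MvPolynomial (Fin 3) K) ^ m * X 1 ^ (2 * a) * X 2 ^ m)
          ).IsWeightedHomogeneous w 0 := by
      rw [hy]
      have := (pow_wh hAX2 m).mul (pow_wh hBsq a)
      rwa [add_zero] at this
    -- conclude
    intro μ hμ
    have hc : Finsupp.weight w μ = 0 := hP (MvPolynomial.mem_support_iff.1 hμ)
    have : ((μ 0 + μ 2 : ℕ) : ZMod 2) = 0 := by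
      rw [Finsupp.weight_apply, Finsupp.sum_fintype _ _ (by intro i; simp)] at hc
      rw [Fin.sum_univ_three] at hc
      simpa [hw, Nat.cast_add] using hc
    exact ZMod.natCast_eq_zero_iff_even.1 this
  exact hle hx
end
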